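/- Let M be a nondegenerate lattice and let α ∈ M be a primitive vector with B(α,α) = 2k for some nonzero integer k, such that k divides B(α,x) for every x ∈ M. Then the discriminant group D_M = Hom_ℤ(M,ℤ)/ι_M(M) is a finite group and |k| divides the order of D_M. -/

import Mathlib

/-- let `M` be a nondegenerate lattice and `α ∈ M` a primitive vector with
`B(α,α) = 2k`, `k ≠ 0`, such that `k` divides `B(α,x)` for every `x ∈ M`. Then the
discriminant group `D_M = Hom(M,ℤ)/ι_M(M)` is finite and `|k|` divides its order. -/
theorem stmt7 {M : Type*} [AddCommGroup M] [Module ℤ M] [Module.Free ℤ M]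
    [Module.Finite ℤ M] (B : LinearMap.BilinForm ℤ M)
    (hsymm : ∀ x y, B x y = B y x)
    (hnondeg : Function.Injective B)
    (α : M)
    (hprim : ∀ (n : ℤ) (y : M ⧸ Submodule.span ℤ {α}), n • y = 0 → n = 0 ∨ y = 0)
    (k : ℤ) (hk : k ≠ 0) (hαα : B α α = 2 * k)
    (hdiv : ∀ x, k ∣ B α x) :
    Finite ((M →ₗ[ℤ] ℤ) ⧸ LinearMap.range B) ∧
      k.natAbs ∣ Nat.card ((M →ₗ[ℤ] ℤ) ⧸ LinearMap.range B) := by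
  classical
  set V := M →ₗ[ℤ] ℤ with hV
  let b := Module.Free.chooseBasis ℤ M
  let c : Module.Basis _ ℤ V := b.dualBasis
  let A := LinearMap.toMatrix b c B
  -- determinant is nonzero
  have hdet : A.det ≠ 0 := by
    intro h
    obtain ⟨v, hv, hAv⟩ := (Matrix.exists_mulVec_eq_zero_iff).mpr h
    apply hv
    set x : M := b.repr.symm (Finsupp.equivFunOnFinite.symm v) with hxdef
    have hrepr : ⇑(b.repr x) = v := by
      rw [hxdef, LinearEquiv.apply_symm_apply]
      exact congrArg _ rfl
    have h1 := LinearMap.toMatrix_mulVec_repr b c B x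
    rw [hrepr, hAv] at h1
    have h2 : c.repr (B x) = 0 :=
      DFunLike.coe_injective (h1.symm.trans (Finsupp.coe_zero).symm)
    have h3 : B x = 0 := (LinearEquiv.map_eq_zero_iff c.repr).mp h2
    have hx0 : x = 0 := hnondeg (by rw [h3, map_zero])
    rw [← hrepr, hx0, map_zero]
    exact Finsupp.coe_zero
  -- every element of the dual is killed by det A modulo the range
  have hkill : ∀ f : V, A.det • f ∈ LinearMap.range B := by
    intro f
    set m : M := b.repr.symm (Finsupp.equivFunOnFinite.symm
      (A.adjugate.mulVec (c.repr f))) with hmdef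
    have hrepr : ⇑(b.repr m) = A.adjugate.mulVec (c.repr f) := by
      rw [hmdef, LinearEquiv.apply_symm_apply]
      exact congrArg _ rfl
    have h1 := LinearMap.toMatrix_mulVec_repr b c B m
    rw [hrepr, Matrix.mulVec_mulVec, Matrix.mul_adjugate, Matrix.smul_mulVec,
      Matrix.one_mulVec] at h1
    refine ⟨m, ?_⟩
    apply c.repr.injective
    apply DFunLike.coe_injective
    show ⇑(c.repr (B m)) = ⇑(c.repr (A.det • f))
    rw [← h1, map_smul, Finsupp.coe_smul]
  have hfin : Finite ((M →ₗ[ℤ] ℤ) ⧸ LinearMap.range B) := by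
    apply Module.finite_of_fg_torsion
    intro q
    obtain ⟨f, rfl⟩ := Submodule.Quotient.mk_surjective _ q
    refine ⟨⟨A.det, mem_nonZeroDivisors_of_ne_zero hdet⟩, ?_⟩
    rw [Submonoid.smul_def]
    show A.det • (Submodule.Quotient.mk f) = 0
    rw [← Submodule.Quotient.mk_smul, Submodule.Quotient.mk_eq_zero]
    exact hkill f
  refine ⟨hfin, ?_⟩
  have h2k : (2 : ℤ) * k ≠ 0 := mul_ne_zero two_ne_zero hk
  -- the functional φ = B(α,·)/k, characterized pointwise
  obtain ⟨φ, hkφ⟩ : ∃ φ : V, ∀ x, k * φ x = B α x := by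
    refine ⟨{ toFun := fun x => B α x / k, map_add' := ?_, map_smul' := ?_ }, ?_⟩
    · intro x y
      obtain ⟨cx, hcx⟩ := hdiv x
      obtain ⟨cy, hcy⟩ := hdiv y
      simp only [map_add, hcx, hcy, ← mul_add, Int.mul_ediv_cancel_left _ hk]
    · intro n x
      obtain ⟨cx, hcx⟩ := hdiv x
      simp only [map_smul, hcx, smul_eq_mul, eq_intCast, Int.cast_id]
      rw [show n * (k * cx) = k * (n * cx) by ring, Int.mul_ediv_cancel_left _ hk,
        Int.mul_ediv_cancel_left _ hk]
    · intro x
      exact Int.mul_ediv_cancel' (hdiv x)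
  set q : (M →ₗ[ℤ] ℤ) ⧸ LinearMap.range B := Submodule.Quotient.mk φ with hq
  -- k divides any integer n with n • q = 0
  have key : ∀ n : ℤ, n • q = 0 → k ∣ n := by
    intro n hn
    rw [hq, ← Submodule.Quotient.mk_smul, Submodule.Quotient.mk_eq_zero] at hn
    obtain ⟨m, hm⟩ := hn
    have hmain : ∀ x, k * B m x = n * B α x := by
      intro x
      have h1 : B m x = n * φ x := by
        rw [hm]; simp
      rw [h1, ← hkφ x]; ring
    have hmem : k • (Submodule.Quotient.mk m : M ⧸ Submodule.span ℤ {α}) = 0 := by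
      rw [← Submodule.Quotient.mk_smul, Submodule.Quotient.mk_eq_zero]
      refine Submodule.mem_span_singleton.mpr ⟨n, hnondeg ?_⟩
      rw [LinearMap.map_smul, map_zsmul]
      ext x
      exact (hmain x).symm
    rcases hprim k _ hmem with h | h
    · exact absurd h hk
    · rw [Submodule.Quotient.mk_eq_zero] at h
      obtain ⟨d, hd⟩ := Submodule.mem_span_singleton.mp h
      have h1 := hmain α
      rw [← hd, LinearMap.map_smul] at h1
      simp only [LinearMap.smul_apply, smul_eq_mul, hαα] at h1
      refine ⟨d, mul_right_cancel₀ h2k ?_⟩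
      rw [← h1]; ring
  -- conclude via the order of q
  have h1 : k.natAbs ∣ addOrderOf q := by
    have hn := addOrderOf_nsmul_eq_zero q
    rw [← Nat.cast_smul_eq_nsmul ℤ] at hn
    have hd : k ∣ (addOrderOf q : ℤ) := key _ hn
    simpa using Int.natAbs_dvd_natAbs.mpr hd
  exact h1.trans (addOrderOf_dvd_natCard q)
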